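/- Let T be a tree that has at least one regular core, and let L ⊆ V be a set such that for every regular core v of T, the subset of L restricted to the vertices of the g-legs of v is a local set for v. Then L is a landmark set of T. -/

import Mathlib

open SimpleGraph

variable {V : Type*} [Fintype V] [DecidableEq V]

/-- A vertex `τ` separates `u` and `w` if its distances to them differ. -/
def Separates (T : SimpleGraph V) (τ u w : V) : Prop :=
  T.dist τ u ≠ T.dist τ w

/-- There are at least two vertices of `L` separating `u` and `w`. -/
def HasTwoSeparators (T : SimpleGraph V) (L : Set V) (u w : V) : Prop :=
  ∃ τ₁ ∈ L, ∃ τ₂ ∈ L, τ₁ ≠ τ₂ ∧ Separates T τ₁ u w ∧ Separates T τ₂ u w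

/-- `L` is a landmark set (non-landmarks model, `k = 2`): every pair of distinct
vertices outside `L` is separated by at least two vertices of `L`. -/
def IsLandmarkSet (T : SimpleGraph V) (L : Set V) : Prop :=
  ∀ u w : V, u ≠ w → u ∉ L → w ∉ L → HasTwoSeparators T L u w

/-- A core is a vertex of degree at least 3. -/
def IsCore (T : SimpleGraph V) [DecidableRel T.Adj] (v : V) : Prop :=
  3 ≤ T.degree v

/-- The subtree of the neighbor `x` of `v`: in a tree, the connected component of `x`
obtained by removing `v`, characterized via distances (`w` is in it iff the path from
`v` to `w` passes through `x`). -/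
def Branch (T : SimpleGraph V) (v x : V) : Set V :=
  {w | T.dist v w = T.dist x w + 1}

/-- The subtree of the neighbor `x` of `v` is a (standard) leg:
a path containing no cores. -/
def IsStandardLeg (T : SimpleGraph V) [DecidableRel T.Adj] (v x : V) : Prop :=
  T.Adj v x ∧ ∀ w ∈ Branch T v x, T.degree w ≤ 2

/-- A short leg consists of a single vertex. -/
def IsShortLeg (T : SimpleGraph V) [DecidableRel T.Adj] (v x : V) : Prop :=
  IsStandardLeg T v x ∧ Branch T v x = {x}

/-- A long leg is a standard leg that is not short. -/
def IsLongLeg (T : SimpleGraph V) [DecidableRel T.Adj] (v x : V) : Prop :=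
  IsStandardLeg T v x ∧ Branch T v x ≠ {x}

/-- A small core: degree exactly 3, with at least two standard legs, one of which is short. -/
def IsSmallCore (T : SimpleGraph V) [DecidableRel T.Adj] (v : V) : Prop :=
  T.degree v = 3 ∧ ∃ x y : V, x ≠ y ∧ IsShortLeg T v x ∧ IsStandardLeg T v y

/-- A regular core is a core that is not small. -/
def IsRegularCore (T : SimpleGraph V) [DecidableRel T.Adj] (v : V) : Prop :=
  IsCore T v ∧ ¬ IsSmallCore T v

/-- A modified leg of `v`: a subtree of a neighbor of `v` containing exactly one core,
which is a small core. -/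
def IsModifiedLeg (T : SimpleGraph V) [DecidableRel T.Adj] (v x : V) : Prop :=
  T.Adj v x ∧ ∃ u ∈ Branch T v x, IsSmallCore T u ∧
    ∀ w ∈ Branch T v x, IsCore T w → w = u

/-- A g-leg is a standard leg or a modified leg. -/
def IsGLeg (T : SimpleGraph V) [DecidableRel T.Adj] (v x : V) : Prop :=
  IsStandardLeg T v x ∨ IsModifiedLeg T v x

/-- A minor core: a regular core which either (i) has at most one g-leg, or
(ii) has degree at least 4, no modified legs, exactly two standard legs one of which
is short, and every other subtree of a neighbor contains a regular core. -/
def IsMinorCore (T : SimpleGraph V) [DecidableRel T.Adj] (v : V) : Prop :=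
  IsRegularCore T v ∧
  ((∀ x y : V, IsGLeg T v x → IsGLeg T v y → x = y) ∨
   (4 ≤ T.degree v ∧ (∀ x : V, ¬ IsModifiedLeg T v x) ∧
    (∃ x y : V, x ≠ y ∧ IsShortLeg T v x ∧ IsStandardLeg T v y ∧
      ∀ z : V, IsStandardLeg T v z → z = x ∨ z = y) ∧
    (∀ z : V, T.Adj v z → ¬ IsGLeg T v z → ∃ w ∈ Branch T v z, IsRegularCore T w)))

/-- A main core is a regular core that is not minor. -/
def IsMainCore (T : SimpleGraph V) [DecidableRel T.Adj] (v : V) : Prop :=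
  IsRegularCore T v ∧ ¬ IsMinorCore T v

/-- The vertices lying on g-legs of `v`. -/
def GLegVerts (T : SimpleGraph V) [DecidableRel T.Adj] (v : V) : Set V :=
  {w | ∃ x : V, IsGLeg T v x ∧ w ∈ Branch T v x}

/-- Type (s,0) solution on the leg of neighbor `x` of `v`: the empty set. -/
def SolS0 (T : SimpleGraph V) (v x : V) (S : Set V) : Prop :=
  S ∩ Branch T v x = ∅

/-- Type (s,1) solution: one vertex of the leg whose position is at least 2. -/
def SolS1 (T : SimpleGraph V) (v x : V) (S : Set V) : Prop :=
  ∃ w : V, S ∩ Branch T v x = {w} ∧ 2 ≤ T.dist v w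

/-- Type (s,2) solution: at least two vertices of the leg. -/
def SolS2 (T : SimpleGraph V) (v x : V) (S : Set V) : Prop :=
  ∃ w₁ ∈ S ∩ Branch T v x, ∃ w₂ ∈ S ∩ Branch T v x, w₁ ≠ w₂

/-- Type (s,3) solution: exactly the vertex with position 1 (that is, `x`). -/
def SolS3 (T : SimpleGraph V) (v x : V) (S : Set V) : Prop :=
  S ∩ Branch T v x = {x}

/-- For a modified leg `x` of `v`: `u` is its small core (at position `T.dist v u`),
and `a`, `b` are the two vertices at position `T.dist v u + 1`, where `b` is the
vertex of a short leg of `u` (the vertex `ℓ^b`) and `a` is the other one (`ℓ^a`). -/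
def MLegPair (T : SimpleGraph V) [DecidableRel T.Adj] (v x u a b : V) : Prop :=
  u ∈ Branch T v x ∧ IsSmallCore T u ∧ a ≠ b ∧
  a ∈ Branch T v x ∧ b ∈ Branch T v x ∧
  T.dist v a = T.dist v u + 1 ∧ T.dist v b = T.dist v u + 1 ∧
  IsShortLeg T u b

/-- Type (m,1) solution on the modified leg `x` of `v`: either `{ℓ^a}` or `{ℓ^b}`. -/
def SolM1 (T : SimpleGraph V) [DecidableRel T.Adj] (v x : V) (S : Set V) : Prop :=
  ∃ u a b : V, MLegPair T v x u a b ∧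
    (S ∩ Branch T v x = {a} ∨ S ∩ Branch T v x = {b})

/-- Type (m,2) solution: contains neither `ℓ^a` nor `ℓ^b`, contains at least two
vertices of positions at least `i + 2`, and no vertex of position `i + 1`. -/
def SolM2 (T : SimpleGraph V) [DecidableRel T.Adj] (v x : V) (S : Set V) : Prop :=
  ∃ u a b : V, MLegPair T v x u a b ∧ a ∉ S ∧ b ∉ S ∧
    (∃ w₁ ∈ S ∩ Branch T v x, ∃ w₂ ∈ S ∩ Branch T v x, w₁ ≠ w₂ ∧
      T.dist v u + 2 ≤ T.dist v w₁ ∧ T.dist v u + 2 ≤ T.dist v w₂) ∧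
    ∀ w ∈ S ∩ Branch T v x, T.dist v w ≠ T.dist v u + 1

/-- Type (m,3) solution: at least two vertices, one of which is `ℓ^a` or `ℓ^b`. -/
def SolM3 (T : SimpleGraph V) [DecidableRel T.Adj] (v x : V) (S : Set V) : Prop :=
  ∃ u a b : V, MLegPair T v x u a b ∧
    (∃ w₁ ∈ S ∩ Branch T v x, ∃ w₂ ∈ S ∩ Branch T v x, w₁ ≠ w₂) ∧
    (a ∈ S ∨ b ∈ S)

/-- `S` is a local set for the core `v`. -/
def IsLocalSet (T : SimpleGraph V) [DecidableRel T.Adj] (v : V) (S : Set V) : Prop :=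
  S ⊆ GLegVerts T v ∧
  -- (1) at most one standard leg has a type (s,0) solution, and every standard leg
  -- has a solution of one of the types (s,0), (s,1), (s,2), (s,3)
  (∀ x y : V, IsStandardLeg T v x → IsStandardLeg T v y → x ≠ y →
    SolS0 T v x S → SolS0 T v y S → False) ∧
  (∀ x : V, IsStandardLeg T v x →
    SolS0 T v x S ∨ SolS1 T v x S ∨ SolS2 T v x S ∨ SolS3 T v x S) ∧
  -- (2) every modified leg has a solution of type (m,1), (m,2) or (m,3)
  (∀ x : V, IsModifiedLeg T v x →
    SolM1 T v x S ∨ SolM2 T v x S ∨ SolM3 T v x S) ∧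
  -- (3) if some standard leg has a type (s,0) solution, no modified leg has type (m,1)
  ((∃ x : V, IsStandardLeg T v x ∧ SolS0 T v x S) →
    ∀ y : V, IsModifiedLeg T v y → ¬ SolM1 T v y S) ∧
  -- (4) if some long leg has a type (s,0) solution, every other long leg has type (s,2)
  (∀ x : V, IsLongLeg T v x → SolS0 T v x S →
    ∀ y : V, IsLongLeg T v y → y ≠ x → SolS2 T v y S) ∧
  -- (5) if some short leg has a type (s,0) solution, every long leg has type (s,2) or (s,3)
  ((∃ x : V, IsShortLeg T v x ∧ SolS0 T v x S) →
    ∀ y : V, IsLongLeg T v y → SolS2 T v y S ∨ SolS3 T v y S)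

/-- A local set is thrifty if its solutions of types (s,2), (m,2) and (m,3)
consist of exactly two vertices each. -/
def IsThrifty (T : SimpleGraph V) [DecidableRel T.Adj] (v : V) (S : Set V) : Prop :=
  (∀ x : V, IsStandardLeg T v x → SolS2 T v x S → (S ∩ Branch T v x).ncard = 2) ∧
  (∀ x : V, IsModifiedLeg T v x → (SolM2 T v x S ∨ SolM3 T v x S) →
    (S ∩ Branch T v x).ncard = 2)


set_option linter.unusedSectionVars false
set_option maxHeartbeats 1000000

namespace TreeAux

variable {T : SimpleGraph V}

lemma path_len (hT : T.IsTree) {a b : V} (p : T.Walk a b) (hp : p.IsPath) :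
    p.length = T.dist a b := by
  obtain ⟨q, hq, hql⟩ := hT.isConnected.exists_path_of_dist a b
  obtain ⟨r, hr⟩ := hT.existsUnique_path a b
  rw [hr.2 p hp, hr.2 q hq] at *
  omega

lemma mem_support_dist_add (hT : T.IsTree) {a b c : V} (p : T.Walk a b) (hp : p.IsPath)
    (hc : c ∈ p.support) : T.dist a c + T.dist c b = T.dist a b := by
  have h1 := path_len hT _ (hp.takeUntil hc)
  have h2 := path_len hT _ (hp.dropUntil hc)
  have h3 : (p.takeUntil c hc).length + (p.dropUntil c hc).length = p.length := by
    rw [← Walk.length_append, Walk.take_spec]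
  rw [path_len hT p hp] at h3
  omega

/-- on a geodesic: there is a point at each intermediate pair of distances -/
lemma exists_toward (hT : T.IsTree) {v w : V} (h : v ≠ w) :
    ∃ x, T.Adj v x ∧ T.dist v w = T.dist x w + 1 := by
  have hd : T.dist v w ≠ 0 := by
    simp [hT.isConnected.dist_eq_zero_iff, h]
  obtain ⟨p, hp, hl⟩ := hT.isConnected.exists_path_of_dist v w
  cases p with
  | nil => exact absurd SimpleGraph.dist_self hd
  | cons hadj q =>
    rename_i x
    refine ⟨x, hadj, ?_⟩
    have h2 := path_len hT q hp.of_cons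
    simp [Walk.length_cons] at hl
    omega

lemma dist_triangle (hT : T.IsTree) (a b c : V) :
    T.dist a c ≤ T.dist a b + T.dist b c := hT.isConnected.dist_triangle

lemma dist_pos (hT : T.IsTree) {a b : V} (h : a ≠ b) : 1 ≤ T.dist a b :=
  hT.isConnected.pos_dist_of_ne h

lemma dist_zero (hT : T.IsTree) {a b : V} (h : T.dist a b = 0) : a = b :=
  (hT.isConnected.dist_eq_zero_iff).mp h

lemma adj_dist (hT : T.IsTree) {a b : V} (h : T.Adj a b) : T.dist a b = 1 :=
  dist_eq_one_iff_adj.mpr h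

/-- uniqueness of the closer neighbour -/
lemma toward_unique (hT : T.IsTree) {v x y w : V} (hx : T.Adj v x) (hy : T.Adj v y)
    (h1 : T.dist v w = T.dist x w + 1) (h2 : T.dist v w = T.dist y w + 1) : x = y := by
  by_contra hne
  obtain ⟨px, hpx, hlx⟩ := hT.isConnected.exists_path_of_dist x w
  obtain ⟨py, hpy, hly⟩ := hT.isConnected.exists_path_of_dist y w
  have hvx : v ∉ px.support := by
    intro hv
    have := mem_support_dist_add hT px hpx hv
    have := adj_dist hT hx.symm
    omega
  have hvy : v ∉ py.support := by
    intro hv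
    have := mem_support_dist_add hT py hpy hv
    have := adj_dist hT hy.symm
    omega
  obtain ⟨r, hr⟩ := hT.existsUnique_path v w
  have e1 := hr.2 (Walk.cons hx px) (hpx.cons hvx)
  have e2 := hr.2 (Walk.cons hy py) (hpy.cons hvy)
  have : (Walk.cons hx px).support = (Walk.cons hy py).support := by rw [e1, e2]
  simp only [Walk.support_cons] at this
  have : px.support = py.support := by injection this
  have hxs : x ∈ py.support := by rw [← this]; exact px.start_mem_support
  have := mem_support_dist_add hT py hpy hxs
  have hd : T.dist x w = T.dist y w := by omega
  have hxy : T.dist y x = 0 := by omega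
  exact hne ((dist_zero hT hxy).symm ▸ rfl) |>.elim

/-- median of three vertices -/
lemma median (hT : T.IsTree) (u v w : V) :
    ∃ z, T.dist u v = T.dist u z + T.dist z v ∧ T.dist u w = T.dist u z + T.dist z w ∧
      T.dist v w = T.dist v z + T.dist z w := by
  obtain ⟨p, hp, hlp⟩ := hT.isConnected.exists_path_of_dist u v
  obtain ⟨r, hrp, hlr⟩ := hT.isConnected.exists_path_of_dist u w
  -- choose z in both supports maximizing dist u z
  have hne : ∃ z ∈ p.support.toFinset ∩ r.support.toFinset, True := by
    refine ⟨u, ?_, trivial⟩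
    simp [Walk.start_mem_support]
  classical
  obtain ⟨z, hz, hzmax⟩ := Finset.exists_max_image (p.support.toFinset ∩ r.support.toFinset)
    (fun y => T.dist u y) (by obtain ⟨z, hz, _⟩ := hne; exact ⟨z, hz⟩)
  simp only [Finset.mem_inter, List.mem_toFinset] at hz hzmax
  obtain ⟨hzp, hzr⟩ := hz
  have e1 := mem_support_dist_add hT p hp hzp
  have e2 := mem_support_dist_add hT r hrp hzr
  refine ⟨z, by omega, by omega, ?_⟩
  -- walk v -> z -> w is a path
  have hq1 : ((p.dropUntil z hzp).reverse).IsPath := (hp.dropUntil hzp).reverse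
  have hq2 : (r.dropUntil z hzr).IsPath := hrp.dropUntil hzr
  have hl1 : ((p.dropUntil z hzp).reverse).length = T.dist v z := by
    rw [Walk.length_reverse, path_len hT _ (hp.dropUntil hzp), dist_comm]
  have hl2 : (r.dropUntil z hzr).length = T.dist z w := path_len hT _ hq2
  set q1 := (p.dropUntil z hzp).reverse
  set q2 := r.dropUntil z hzr
  have hdisj : ∀ y ∈ q1.support, y ∈ q2.support → y = z := by
    intro y hy1 hy2
    have hy1' : y ∈ (p.dropUntil z hzp).support := by
      rwa [Walk.support_reverse, List.mem_reverse] at hy1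
    have hyp : y ∈ p.support := p.support_dropUntil_subset hzp hy1'
    have hyr : y ∈ r.support := r.support_dropUntil_subset hzr hy2
    have hle := hzmax y ⟨hyp, hyr⟩
    -- y on dropUntil part: dist u y = dist u z + dist z y
    have h1 := mem_support_dist_add hT _ (hp.dropUntil hzp) hy1'
    have h2 := mem_support_dist_add hT p hp hyp
    -- dist z y + dist y v = dist z v ; dist u y + dist y v = dist u v
    have : T.dist u y = T.dist u z + T.dist z y := by omega
    have : T.dist z y = 0 := by omega
    exact (dist_zero hT this).symm
  have hpath : (q1.append q2).IsPath := by
    rw [Walk.isPath_def, Walk.support_append, List.nodup_append]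
    refine ⟨hq1.support_nodup, ?_, ?_⟩
    · have := hq2.support_nodup
      rw [Walk.support_eq_cons q2] at this
      exact this.of_cons
    · intro y hy1 y' hy2 hyy
      rw [← hyy] at hy2
      have hy2' : y ∈ q2.support := List.mem_of_mem_tail hy2
      have := hdisj y hy1 hy2'
      subst this
      have := hq2.support_nodup
      rw [Walk.support_eq_cons q2] at this
      exact (List.nodup_cons.mp this).1 hy2
  have := path_len hT _ hpath
  rw [Walk.length_append, hl1, hl2] at this
  omega


lemma mem_branch {v x w : V} : w ∈ Branch T v x ↔ T.dist v w = T.dist x w + 1 := Iff.rfl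

lemma self_mem_branch (hT : T.IsTree) {v x : V} (h : T.Adj v x) : x ∈ Branch T v x := by
  rw [mem_branch, adj_dist hT h, SimpleGraph.dist_self]

lemma not_self_mem_branch {v x : V} : v ∉ Branch T v x := by
  rw [mem_branch, SimpleGraph.dist_self]; omega

lemma base_not_mem (hT : T.IsTree) {v x w : V} (h : w ∈ Branch T v x) : w ≠ v := by
  rintro rfl; exact not_self_mem_branch h

lemma dist_base_pos (hT : T.IsTree) {v x w : V} (h : w ∈ Branch T v x) : 1 ≤ T.dist v w := by
  rw [mem_branch] at h; omega

/-- every vertex other than v is in the branch of a unique neighbour -/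
lemma exists_branch (hT : T.IsTree) {v w : V} (h : w ≠ v) :
    ∃ x, T.Adj v x ∧ w ∈ Branch T v x := by
  obtain ⟨x, hadj, hd⟩ := exists_toward hT (Ne.symm h)
  exact ⟨x, hadj, hd⟩

lemma branch_disjoint (hT : T.IsTree) {v x y w : V} (hx : T.Adj v x) (hy : T.Adj v y)
    (hwx : w ∈ Branch T v x) (hwy : w ∈ Branch T v y) : x = y :=
  toward_unique hT hx hy hwx hwy

/-- suffix lemma : if v' lies in a branch and y is beyond v' (geodesically), y is in the branch -/
lemma mem_branch_of_geodesic (hT : T.IsTree) {v x v' y : V} (hx : T.Adj v x)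
    (hv' : v' ∈ Branch T v x) (hgeo : T.dist v y = T.dist v v' + T.dist v' y) :
    y ∈ Branch T v x := by
  rw [mem_branch] at hv' ⊢
  have h1 : T.dist x y ≤ T.dist x v' + T.dist v' y := dist_triangle hT _ _ _
  have h2 : T.dist v y ≤ T.dist x y + 1 := by
    have := dist_triangle hT v x y
    rw [adj_dist hT hx] at this; omega
  have h3 : T.dist x y ≤ T.dist v y + 1 := by
    have := dist_triangle hT x v y
    have hc : T.dist x v = T.dist v x := SimpleGraph.dist_comm
    rw [hc, adj_dist hT hx] at this; omega
  omega

/-- prefix lemma : if m is in the branch and z is on the geodesic from v to m, z ≠ v,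
then z is in the branch -/
lemma mem_branch_of_geodesic_prefix (hT : T.IsTree) {v x m z : V} (hx : T.Adj v x)
    (hm : m ∈ Branch T v x) (hgeo : T.dist v m = T.dist v z + T.dist z m) (hz : z ≠ v) :
    z ∈ Branch T v x := by
  obtain ⟨n, hn, hnd⟩ := exists_toward hT (Ne.symm hz)
  have hnm : T.dist v m = T.dist n m + 1 := by
    have h1 : T.dist n m ≤ T.dist n z + T.dist z m := dist_triangle hT _ _ _
    have h2 : T.dist v m ≤ T.dist n m + 1 := by
      have := dist_triangle hT v n m
      rw [adj_dist hT hn] at this; omega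
    omega
  have := toward_unique hT hn hx hnm hm
  subst this
  rw [mem_branch] at hm ⊢
  omega

/-- through-vertex additivity: vertices in different branches of v -/
lemma dist_add_of_branches_ne (hT : T.IsTree) {v x y a b : V} (hx : T.Adj v x) (hy : T.Adj v y)
    (hxy : x ≠ y) (ha : a ∈ Branch T v x) (hb : b ∈ Branch T v y) :
    T.dist a b = T.dist a v + T.dist v b := by
  obtain ⟨z, e1, e2, e3⟩ := median hT v a b
  -- e1 : dist v a = dist v z + dist z a ; e2 : dist v b = dist v z + z b ; e3 : a b
  by_cases hzv : z = v
  · rw [hzv] at e3; exact e3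
  · exfalso
    have hza : z ∈ Branch T v x := mem_branch_of_geodesic_prefix hT hx ha e1 hzv
    have hzb : z ∈ Branch T v y := mem_branch_of_geodesic_prefix hT hy hb e2 hzv
    exact hxy (branch_disjoint hT hx hy hza hzb)

/-- distinct toward-neighbours -/
lemma toward_ne (hT : T.IsTree) {z a b na nb : V} (hna : T.Adj z na) (hnb : T.Adj z nb)
    (hda : T.dist z a = T.dist na a + 1) (hdb : T.dist z b = T.dist nb b + 1)
    (hgeo : T.dist a b = T.dist a z + T.dist z b) : na ≠ nb := by
  rintro rfl
  have h1 : T.dist a b ≤ T.dist a na + T.dist na b := dist_triangle hT _ _ _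
  have hc1 : T.dist a na = T.dist na a := SimpleGraph.dist_comm
  have hc2 : T.dist a z = T.dist z a := SimpleGraph.dist_comm
  omega

/-- subset lemma -/
lemma branch_subset (hT : T.IsTree) {v x v' x' : V} (hx : T.Adj v x) (hx' : T.Adj v' x')
    (hv' : v' ∈ Branch T v x) (hvout : v ∉ Branch T v' x') :
    Branch T v' x' ⊆ Branch T v x := by
  intro y hy
  have hvne : v ≠ v' := by rintro rfl; exact not_self_mem_branch hv'
  obtain ⟨s, hs, hvs⟩ := exists_branch hT hvne
  have hsne : s ≠ x' := by
    rintro rfl; exact hvout hvs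
  have hgeo : T.dist y v = T.dist y v' + T.dist v' v :=
    dist_add_of_branches_ne hT hx' hs (Ne.symm hsne) hy hvs
  -- i.e. dist v y = dist v v' + dist v' y
  have hgeo' : T.dist v y = T.dist v v' + T.dist v' y := by
    have hc1 : T.dist v y = T.dist y v := SimpleGraph.dist_comm
    have hc2 : T.dist v v' = T.dist v' v := SimpleGraph.dist_comm
    have hc3 : T.dist v' y = T.dist y v' := SimpleGraph.dist_comm
    omega
  exact mem_branch_of_geodesic hT hx hv' hgeo'


variable [DecidableRel T.Adj]

lemma three_le_degree (hT : T.IsTree) {z a b c : V} (ha : T.Adj z a) (hb : T.Adj z b)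
    (hc : T.Adj z c) (hab : a ≠ b) (hac : a ≠ c) (hbc : b ≠ c) : IsCore T z := by
  have hsub : ({a, b, c} : Finset V) ⊆ T.neighborFinset z := by
    intro s hs
    simp only [Finset.mem_insert, Finset.mem_singleton] at hs
    rcases hs with rfl | rfl | rfl <;> simpa [SimpleGraph.mem_neighborFinset]
  have hcard : ({a, b, c} : Finset V).card = 3 := by
    rw [Finset.card_insert_of_notMem (by simp [hab, hac]),
      Finset.card_insert_of_notMem (by simp [hbc]), Finset.card_singleton]
  have := Finset.card_le_card hsub
  rw [hcard] at this
  rwa [IsCore, SimpleGraph.degree]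

lemma adj_mem_of_degree_three (h3 : T.degree z = 3) {a b c s : V} (ha : T.Adj z a)
    (hb : T.Adj z b) (hc : T.Adj z c) (hab : a ≠ b) (hac : a ≠ c) (hbc : b ≠ c)
    (hs : T.Adj z s) : s = a ∨ s = b ∨ s = c := by
  have hsub : ({a, b, c} : Finset V) ⊆ T.neighborFinset z := by
    intro t ht
    simp only [Finset.mem_insert, Finset.mem_singleton] at ht
    rcases ht with rfl | rfl | rfl <;> simpa [SimpleGraph.mem_neighborFinset]
  have hcard : ({a, b, c} : Finset V).card = 3 := by
    rw [Finset.card_insert_of_notMem (by simp [hab, hac]),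
      Finset.card_insert_of_notMem (by simp [hbc]), Finset.card_singleton]
  have heq : ({a, b, c} : Finset V) = T.neighborFinset z := by
    apply Finset.eq_of_subset_of_card_le hsub
    rw [hcard]; exact le_of_eq h3
  have : s ∈ ({a, b, c} : Finset V) := by
    rw [heq]; simpa [SimpleGraph.mem_neighborFinset]
  simpa using this

lemma leg_coreless {v s w : V} (hleg : IsStandardLeg T v s) (hw : w ∈ Branch T v s) :
    ¬ IsCore T w := by
  have := hleg.2 w hw
  rw [IsCore]; omega

lemma small_core_core {c : V} (hc : IsSmallCore T c) : IsCore T c := by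
  rw [IsCore, hc.1]

/-- a small core cannot lie strictly between two cores -/
lemma not_between (hT : T.IsTree) {c w1 w2 : V} (hc : IsSmallCore T c) (h1 : IsCore T w1)
    (h2 : IsCore T w2) (hgeo : T.dist w1 w2 = T.dist w1 c + T.dist c w2)
    (hne1 : c ≠ w1) (hne2 : c ≠ w2) : False := by
  obtain ⟨hdeg, sx, sy, hsxy, hshort, hstd⟩ := hc
  obtain ⟨n1, hn1, hd1⟩ := exists_toward hT hne1
  obtain ⟨n2, hn2, hd2⟩ := exists_toward hT hne2
  have hgeo' : T.dist w1 w2 = T.dist w1 c + T.dist c w2 := hgeo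
  have hn12 : n1 ≠ n2 := by
    refine toward_ne hT hn1 hn2 hd1 hd2 ?_
    have hcomm : T.dist w1 c = T.dist c w1 := SimpleGraph.dist_comm
    omega
  have hw1B : w1 ∈ Branch T c n1 := hd1
  have hw2B : w2 ∈ Branch T c n2 := hd2
  have hn1legs : n1 ≠ sx ∧ n1 ≠ sy := by
    constructor <;> rintro rfl
    · exact leg_coreless hshort.1 hw1B h1
    · exact leg_coreless hstd hw1B h1
  have hn2legs : n2 ≠ sx ∧ n2 ≠ sy := by
    constructor <;> rintro rfl
    · exact leg_coreless hshort.1 hw2B h2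
    · exact leg_coreless hstd hw2B h2
  rcases adj_mem_of_degree_three hdeg hshort.1.1 hstd.1 hn1 hsxy hn1legs.1.symm hn1legs.2.symm
    hn2 with h | h | h
  · exact hn2legs.1 h
  · exact hn2legs.2 h
  · exact hn12 h.symm

lemma regular_free_small {w : V} (hw : IsCore T w) (h : ¬ IsRegularCore T w) :
    IsSmallCore T w := by
  rw [IsRegularCore] at h
  tauto

/-- divergence lemma : a branch of a core containing no regular core is a g-leg -/
lemma divergence (hT : T.IsTree) {v x : V} (hv : IsCore T v) (hadj : T.Adj v x)
    (hnoreg : ∀ w ∈ Branch T v x, ¬ IsRegularCore T w) : IsGLeg T v x := by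
  by_cases hc : ∃ c ∈ Branch T v x, IsCore T c
  · right
    obtain ⟨c, hcB, hccore⟩ := hc
    have hcsmall : IsSmallCore T c := regular_free_small hccore (hnoreg c hcB)
    refine ⟨hadj, c, hcB, hcsmall, ?_⟩
    intro w hwB hwcore
    by_contra hne
    have hwsmall : IsSmallCore T w := regular_free_small hwcore (hnoreg w hwB)
    -- median of v, c, w
    obtain ⟨z, e1, e2, e3⟩ := median hT v c w
    have hcv : c ≠ v := base_not_mem hT hcB
    have hwv : w ≠ v := base_not_mem hT hwB
    by_cases hzv : z = v
    · -- geodesic c-w through v : shortcut through x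
      rw [hzv] at e1 e2 e3
      have hs : T.dist c w ≤ T.dist c x + T.dist x w := dist_triangle hT _ _ _
      have hc1 : T.dist c x = T.dist x c := SimpleGraph.dist_comm
      have hc2 : T.dist c v = T.dist v c := SimpleGraph.dist_comm
      have hb1 : T.dist v c = T.dist x c + 1 := hcB
      have hb2 : T.dist v w = T.dist x w + 1 := hwB
      omega
    by_cases hzc : z = c
    · rw [hzc] at e1 e2 e3
      exact not_between hT hcsmall hv hwcore (by
        have hc2 : T.dist v c = T.dist c v := SimpleGraph.dist_comm
        omega) hcv (fun h => hne h.symm)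
    by_cases hzw : z = w
    · rw [hzw] at e1 e2 e3
      exact not_between hT hwsmall hv hccore (by
        have hc2 : T.dist v w = T.dist w v := SimpleGraph.dist_comm
        have hc3 : T.dist c w = T.dist w c := SimpleGraph.dist_comm
        omega) hwv hne
    -- z is a core strictly inside
    obtain ⟨nv, hnv, hdnv⟩ := exists_toward hT hzv
    obtain ⟨nc, hnc, hdnc⟩ := exists_toward hT hzc
    obtain ⟨nw, hnw, hdnw⟩ := exists_toward hT hzw
    have hvc : T.dist v c = T.dist v z + T.dist z c := e1
    have hgvc : T.dist v c = T.dist v z + T.dist z c := e1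
    have hnvc : nv ≠ nc := by
      refine toward_ne hT hnv hnc hdnv hdnc ?_
      have hc1 : T.dist v z = T.dist z v := SimpleGraph.dist_comm
      omega
    have hnvw : nv ≠ nw := by
      refine toward_ne hT hnv hnw hdnv hdnw ?_
      have hc1 : T.dist v z = T.dist z v := SimpleGraph.dist_comm
      omega
    have hncw : nc ≠ nw := by
      refine toward_ne hT hnc hnw hdnc hdnw ?_
      have hc1 : T.dist c z = T.dist z c := SimpleGraph.dist_comm
      omega
    have hzcore : IsCore T z := three_le_degree hT hnv hnc hnw hnvc hnvw hncw
    have hzB : z ∈ Branch T v x := mem_branch_of_geodesic_prefix hT hadj hcB e1 hzv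
    have hzsmall : IsSmallCore T z := regular_free_small hzcore (hnoreg z hzB)
    exact not_between hT hzsmall hccore hwcore (by
      have hc1 : T.dist c z = T.dist z c := SimpleGraph.dist_comm
      omega) hzc hzw
  · left
    push_neg at hc
    exact ⟨hadj, fun w hw => by have := hc w hw; rw [IsCore] at this; omega⟩

lemma S_inter_branch {L : Set V} {v s : V} (hg : IsGLeg T v s) :
    (L ∩ GLegVerts T v) ∩ Branch T v s = L ∩ Branch T v s := by
  ext τ
  constructor
  · rintro ⟨⟨h1, _⟩, h3⟩; exact ⟨h1, h3⟩
  · rintro ⟨h1, h3⟩; exact ⟨⟨h1, ⟨s, hg, h3⟩⟩, h3⟩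

lemma sol_two_of_std {S : Set V} {v s : V} (h : SolS2 T v s S) :
    ∃ τ₁ ∈ S ∩ Branch T v s, ∃ τ₂ ∈ S ∩ Branch T v s, τ₁ ≠ τ₂ := h

lemma sol_two_of_mod {S : Set V} {v s : V} (h : SolM2 T v s S ∨ SolM3 T v s S) :
    ∃ τ₁ ∈ S ∩ Branch T v s, ∃ τ₂ ∈ S ∩ Branch T v s, τ₁ ≠ τ₂ := by
  rcases h with ⟨u, a, b, _, _, _, ⟨w1, h1, w2, h2, hne, _, _⟩, _⟩ | ⟨u, a, b, _, ⟨w1, h1, w2, h2, hne⟩, _⟩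
  · exact ⟨w1, h1, w2, h2, hne⟩
  · exact ⟨w1, h1, w2, h2, hne⟩

lemma sol_mod_nonempty {S : Set V} {v s : V} (h : SolM1 T v s S ∨ SolM2 T v s S ∨ SolM3 T v s S) :
    (S ∩ Branch T v s).Nonempty := by
  rcases h with ⟨u, a, b, _, h | h⟩ | h
  · exact ⟨a, by rw [h]; rfl⟩
  · exact ⟨b, by rw [h]; rfl⟩
  · obtain ⟨τ, h1, _⟩ := sol_two_of_mod h
    exact ⟨τ, h1⟩

lemma sol_std_cases {S : Set V} {v s : V}
    (h : SolS0 T v s S ∨ SolS1 T v s S ∨ SolS2 T v s S ∨ SolS3 T v s S) :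
    SolS0 T v s S ∨ (S ∩ Branch T v s).Nonempty := by
  rcases h with h | ⟨w, hw, _⟩ | ⟨w1, h1, _⟩ | h
  · exact Or.inl h
  · exact Or.inr ⟨w, by rw [hw]; rfl⟩
  · exact Or.inr ⟨w1, h1⟩
  · exact Or.inr ⟨s, by rw [h]; rfl⟩

lemma std_short_or_long {v s : V} (h : IsStandardLeg T v s) :
    IsShortLeg T v s ∨ IsLongLeg T v s := by
  by_cases hb : Branch T v s = {s}
  · exact Or.inl ⟨h, hb⟩
  · exact Or.inr ⟨h, hb⟩

/-- Claim E : a branch containing a regular core contains two landmarks. -/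
lemma claimE (hT : T.IsTree) {L : Set V}
    (hloc : ∀ v : V, IsRegularCore T v → IsLocalSet T v (L ∩ GLegVerts T v))
    {v₀ x₀ : V} (hadj : T.Adj v₀ x₀) (hreg : ∃ r ∈ Branch T v₀ x₀, IsRegularCore T r) :
    ∃ τ₁ ∈ L ∩ Branch T v₀ x₀, ∃ τ₂ ∈ L ∩ Branch T v₀ x₀, τ₁ ≠ τ₂ := by
  classical
  set B := Branch T v₀ x₀ with hBdef
  -- farthest regular core in B
  set F : Finset V := Finset.univ.filter (fun r => r ∈ B ∧ IsRegularCore T r) with hF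
  have hFne : F.Nonempty := by
    obtain ⟨r, h1, h2⟩ := hreg
    exact ⟨r, by simp [hF, h1, h2]⟩
  obtain ⟨v, hvF, hvmax⟩ := Finset.exists_max_image F (fun r => T.dist v₀ r) hFne
  simp only [hF, Finset.mem_filter, Finset.mem_univ, true_and] at hvF hvmax
  obtain ⟨hvB, hvreg⟩ := hvF
  have hvcore : IsCore T v := hvreg.1
  have hvv₀ : v ≠ v₀ := base_not_mem hT hvB
  obtain ⟨s₀, hs₀, hds₀⟩ := exists_toward hT hvv₀
  have hv₀B : v₀ ∈ Branch T v s₀ := hds₀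
  -- away branches land in B
  have haway : ∀ s, T.Adj v s → s ≠ s₀ → ∀ y ∈ Branch T v s, y ∈ B := by
    intro s hs hne y hy
    have hgeo := dist_add_of_branches_ne hT hs hs₀ hne hy hv₀B
    have hgeo' : T.dist v₀ y = T.dist v₀ v + T.dist v y := by
      have c1 : T.dist v₀ y = T.dist y v₀ := SimpleGraph.dist_comm
      have c2 : T.dist v₀ v = T.dist v v₀ := SimpleGraph.dist_comm
      have c3 : T.dist v y = T.dist y v := SimpleGraph.dist_comm
      omega
    exact mem_branch_of_geodesic hT hadj hvB hgeo'
  -- away branches contain no regular core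
  have hanoreg : ∀ s, T.Adj v s → s ≠ s₀ → ∀ y ∈ Branch T v s, ¬ IsRegularCore T y := by
    intro s hs hne y hy hyreg
    have hyB : y ∈ B := haway s hs hne y hy
    have hle := hvmax y ⟨hyB, hyreg⟩
    have h1 : 1 ≤ T.dist v y := dist_base_pos hT hy
    have hgeo := dist_add_of_branches_ne hT hs hs₀ hne hy hv₀B
    have c1 : T.dist v₀ y = T.dist y v₀ := SimpleGraph.dist_comm
    have c2 : T.dist v₀ v = T.dist v v₀ := SimpleGraph.dist_comm
    have c3 : T.dist v y = T.dist y v := SimpleGraph.dist_comm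
    omega
  have hgleg : ∀ s, T.Adj v s → s ≠ s₀ → IsGLeg T v s := fun s hs hne =>
    divergence hT hvcore hs (hanoreg s hs hne)
  -- local set at v
  have hlv := hloc v hvreg
  obtain ⟨hsub, hpairS0, hstdsol, hmodsol, hnoM1, hlongS0, hshortS0⟩ := hlv
  set S : Set V := L ∩ GLegVerts T v with hSdef
  -- helper : finish from two landmarks in a single away leg
  have fin1 : ∀ s, T.Adj v s → s ≠ s₀ →
      (∃ τ₁ ∈ S ∩ Branch T v s, ∃ τ₂ ∈ S ∩ Branch T v s, τ₁ ≠ τ₂) →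
      ∃ τ₁ ∈ L ∩ B, ∃ τ₂ ∈ L ∩ B, τ₁ ≠ τ₂ := by
    rintro s hs hne ⟨τ₁, ⟨hτ₁L, _⟩, τ₂, ⟨hτ₂L, _⟩, hτne⟩
    rename_i hτ₁B hτ₂B
    exact ⟨τ₁, ⟨hτ₁L.1, haway s hs hne τ₁ hτ₁B⟩, τ₂, ⟨hτ₂L.1, haway s hs hne τ₂ hτ₂B⟩, hτne⟩
  -- helper : finish from two nonempty distinct away legs
  have fin2 : ∀ s t, T.Adj v s → T.Adj v t → s ≠ s₀ → t ≠ s₀ → s ≠ t →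
      (S ∩ Branch T v s).Nonempty → (S ∩ Branch T v t).Nonempty →
      ∃ τ₁ ∈ L ∩ B, ∃ τ₂ ∈ L ∩ B, τ₁ ≠ τ₂ := by
    rintro s t hs ht hsne htne hst ⟨τ₁, hτ₁L, hτ₁B⟩ ⟨τ₂, hτ₂L, hτ₂B⟩
    refine ⟨τ₁, ⟨hτ₁L.1, haway s hs hsne τ₁ hτ₁B⟩, τ₂, ⟨hτ₂L.1, haway t ht htne τ₂ hτ₂B⟩, ?_⟩
    rintro rfl
    exact hst (branch_disjoint hT hs ht hτ₁B hτ₂B)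
  -- each away leg : S0-std or nonempty
  have hleg_cases : ∀ s, T.Adj v s → s ≠ s₀ →
      (IsStandardLeg T v s ∧ SolS0 T v s S) ∨ (S ∩ Branch T v s).Nonempty := by
    intro s hs hne
    rcases hgleg s hs hne with hstd | hmod
    · rcases sol_std_cases (hstdsol s hstd) with h | h
      · exact Or.inl ⟨hstd, h⟩
      · exact Or.inr h
    · exact Or.inr (sol_mod_nonempty (hmodsol s hmod))
  -- two distinct away neighbours
  have hdeg : 3 ≤ T.degree v := hvcore
  have hcard : 2 ≤ ((T.neighborFinset v).erase s₀).card := by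
    have := Finset.pred_card_le_card_erase (a := s₀) (s := T.neighborFinset v)
    have hd2 : T.degree v = (T.neighborFinset v).card := rfl
    omega
  have hpos1 : 0 < ((T.neighborFinset v).erase s₀).card := by omega
  obtain ⟨s₁, hs₁mem⟩ := Finset.card_pos.mp hpos1
  have hcard2 : 1 ≤ (((T.neighborFinset v).erase s₀).erase s₁).card := by
    have := Finset.pred_card_le_card_erase (a := s₁) (s := (T.neighborFinset v).erase s₀)
    omega
  have hpos2 : 0 < (((T.neighborFinset v).erase s₀).erase s₁).card := by omega
  obtain ⟨s₂, hs₂mem⟩ := Finset.card_pos.mp hpos2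
  have hs₂mem' := Finset.mem_of_mem_erase hs₂mem
  have hs₁ : T.Adj v s₁ := by
    have := Finset.mem_of_mem_erase hs₁mem
    rwa [SimpleGraph.mem_neighborFinset] at this
  have hs₂ : T.Adj v s₂ := by
    have := Finset.mem_of_mem_erase hs₂mem'
    rwa [SimpleGraph.mem_neighborFinset] at this
  have hs₁s₀ : s₁ ≠ s₀ := Finset.ne_of_mem_erase hs₁mem
  have hs₂s₀ : s₂ ≠ s₀ := Finset.ne_of_mem_erase hs₂mem'
  have hs₁s₂ : s₁ ≠ s₂ := (Finset.ne_of_mem_erase hs₂mem).symm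
  -- main case analysis, symmetric in (s₁, s₂): inner claim
  have inner : ∀ sZ sE, T.Adj v sZ → T.Adj v sE → sZ ≠ s₀ → sE ≠ s₀ → sZ ≠ sE →
      IsStandardLeg T v sZ → SolS0 T v sZ S → (S ∩ Branch T v sE).Nonempty →
      ∃ τ₁ ∈ L ∩ B, ∃ τ₂ ∈ L ∩ B, τ₁ ≠ τ₂ := by
    intro sZ sE hZ hE hZ0 hE0 hZE hZstd hZS0 hEne
    -- if degree ≥ 4, get a third away neighbour
    by_cases h4 : 4 ≤ T.degree v
    · have hc3 : 1 ≤ ((((T.neighborFinset v).erase s₀).erase sZ).erase sE).card := by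
        have e1 := Finset.pred_card_le_card_erase (a := s₀) (s := T.neighborFinset v)
        have e2 := Finset.pred_card_le_card_erase (a := sZ) (s := (T.neighborFinset v).erase s₀)
        have e3 := Finset.pred_card_le_card_erase (a := sE)
          (s := ((T.neighborFinset v).erase s₀).erase sZ)
        have hd2 : T.degree v = (T.neighborFinset v).card := rfl
        omega
      have hpos3 : 0 < ((((T.neighborFinset v).erase s₀).erase sZ).erase sE).card := by omega
      obtain ⟨s₃, hs₃mem⟩ := Finset.card_pos.mp hpos3
      have h1 := Finset.mem_of_mem_erase hs₃mem
      have h2 := Finset.mem_of_mem_erase h1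
      have hs₃ : T.Adj v s₃ := by
        have := Finset.mem_of_mem_erase h2
        rwa [SimpleGraph.mem_neighborFinset] at this
      have hs₃0 : s₃ ≠ s₀ := Finset.ne_of_mem_erase h2
      have hs₃Z : s₃ ≠ sZ := Finset.ne_of_mem_erase h1
      have hs₃E : s₃ ≠ sE := Finset.ne_of_mem_erase hs₃mem
      rcases hleg_cases s₃ hs₃ hs₃0 with ⟨hstd3, hS03⟩ | hne3
      · exact (hpairS0 s₃ sZ hstd3 hZstd hs₃Z hS03 hZS0).elim
      · exact fin2 s₃ sE hs₃ hE hs₃0 hE0 hs₃E hne3 hEne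
    -- degree = 3
    have hdeg3 : T.degree v = 3 := by omega
    rcases hgleg sE hE hE0 with hEstd | hEmod
    · -- sE standard
      rcases std_short_or_long hZstd with hZshort | hZlong
      · -- v is small : contradiction
        exact (hvreg.2 ⟨hdeg3, sZ, sE, hZE, hZshort, hEstd⟩).elim
      · rcases std_short_or_long hEstd with hEshort | hElong
        · exact (hvreg.2 ⟨hdeg3, sE, sZ, hZE.symm, hEshort, hZstd⟩).elim
        · -- both long : condition (4) gives SolS2 on sE
          have hS2 := hlongS0 sZ hZlong hZS0 sE hElong hZE.symm
          exact fin1 sE hE hE0 (sol_two_of_std hS2)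
    · -- sE modified : condition (3) excludes M1
      have hnM1 := hnoM1 ⟨sZ, hZstd, hZS0⟩ sE hEmod
      rcases hmodsol sE hEmod with hM1 | hM
      · exact (hnM1 hM1).elim
      · exact fin1 sE hE hE0 (sol_two_of_mod hM)
  -- combine
  rcases hleg_cases s₁ hs₁ hs₁s₀ with ⟨hstd1, hS01⟩ | hne1
  · rcases hleg_cases s₂ hs₂ hs₂s₀ with ⟨hstd2, hS02⟩ | hne2
    · exact (hpairS0 s₁ s₂ hstd1 hstd2 hs₁s₂ hS01 hS02).elim
    · exact inner s₁ s₂ hs₁ hs₂ hs₁s₀ hs₂s₀ hs₁s₂ hstd1 hS01 hne2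
  · rcases hleg_cases s₂ hs₂ hs₂s₀ with ⟨hstd2, hS02⟩ | hne2
    · exact inner s₂ s₁ hs₂ hs₁ hs₂s₀ hs₁s₀ hs₁s₂.symm hstd2 hS02 hne1
    · exact fin2 s₁ s₂ hs₁ hs₂ hs₁s₀ hs₂s₀ hs₁s₂ hne1 hne2

/-- Claim H auxiliary: recursion shrinking the branch containing the small core `m`. -/
lemma claimH_aux (hT : T.IsTree) {m : V} (hm : IsSmallCore T m) :
    ∀ n v x, IsRegularCore T v → T.Adj v x → m ∈ Branch T v x → (Branch T v x).ncard = n →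
    ∃ v' x', IsRegularCore T v' ∧ T.Adj v' x' ∧ m ∈ Branch T v' x' ∧
      ∀ c ∈ Branch T v' x', IsCore T c → c = m := by
  intro n
  induction n using Nat.strong_induction_on with
  | _ n ih =>
    intro v x hvreg hadj hmB hcard
    by_cases hall : ∀ c ∈ Branch T v x, IsCore T c → c = m
    · exact ⟨v, x, hvreg, hadj, hmB, hall⟩
    push_neg at hall
    obtain ⟨c, hcB, hccore, hcm⟩ := hall
    have hvcore : IsCore T v := hvreg.1
    have hmv : m ≠ v := base_not_mem hT hmB
    have hcv : c ≠ v := base_not_mem hT hcB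
    have hmcore : IsCore T m := small_core_core hm
    -- recursion step
    have recstep : ∀ w, w ∈ Branch T v x → IsRegularCore T w → w ≠ v → w ≠ m →
        T.dist v m = T.dist v w + T.dist w m →
        ∃ v' x', IsRegularCore T v' ∧ T.Adj v' x' ∧ m ∈ Branch T v' x' ∧
          ∀ c' ∈ Branch T v' x', IsCore T c' → c' = m := by
      intro w hwB hwreg hwv hwm hgeo
      obtain ⟨xw, hxw, hdxw⟩ := exists_toward hT hwm
      obtain ⟨nv, hnv, hdnv⟩ := exists_toward hT hwv
      have hne : nv ≠ xw := by
        refine toward_ne hT hnv hxw hdnv hdxw ?_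
        have c1 : T.dist v w = T.dist w v := SimpleGraph.dist_comm
        omega
      have hvout : v ∉ Branch T w xw := by
        intro hmem
        exact hne (branch_disjoint hT hnv hxw hdnv hmem)
      have hsub : Branch T w xw ⊆ Branch T v x := branch_subset hT hadj hxw hwB hvout
      have hss : Branch T w xw ⊂ Branch T v x :=
        ⟨hsub, fun h => not_self_mem_branch (h hwB)⟩
      have hlt : (Branch T w xw).ncard < n := by
        rw [← hcard]
        exact Set.ncard_lt_ncard hss (Set.toFinite _)
      exact ih _ hlt w xw hwreg hxw hdxw rfl
    -- median of v, c, m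
    obtain ⟨z, e1, e2, e3⟩ := median hT v c m
    by_cases hzv : z = v
    · rw [hzv] at e1 e2 e3
      have hs : T.dist c m ≤ T.dist c x + T.dist x m := dist_triangle hT _ _ _
      have c1 : T.dist c x = T.dist x c := SimpleGraph.dist_comm
      have c2 : T.dist c v = T.dist v c := SimpleGraph.dist_comm
      have hb1 : T.dist v c = T.dist x c + 1 := hcB
      have hb2 : T.dist v m = T.dist x m + 1 := hmB
      omega
    by_cases hzm : z = m
    · rw [hzm] at e1 e2 e3
      exact (not_between hT hm hvcore hccore e1 hmv (fun h => hcm h.symm)).elim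
    by_cases hzc : z = c
    · rw [hzc] at e1 e2 e3
      by_cases hcreg : IsRegularCore T c
      · exact recstep c hcB hcreg hcv hcm e2
      · exact (not_between hT (regular_free_small hccore hcreg) hvcore hmcore e2
          hcv hcm).elim
    -- z strictly inside
    obtain ⟨nv, hnv, hdnv⟩ := exists_toward hT hzv
    obtain ⟨nc, hnc, hdnc⟩ := exists_toward hT hzc
    obtain ⟨nm, hnm, hdnm⟩ := exists_toward hT hzm
    have hnvc : nv ≠ nc := by
      refine toward_ne hT hnv hnc hdnv hdnc ?_
      have c1 : T.dist v z = T.dist z v := SimpleGraph.dist_comm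
      omega
    have hnvm : nv ≠ nm := by
      refine toward_ne hT hnv hnm hdnv hdnm ?_
      have c1 : T.dist v z = T.dist z v := SimpleGraph.dist_comm
      omega
    have hncm : nc ≠ nm := by
      refine toward_ne hT hnc hnm hdnc hdnm ?_
      have c1 : T.dist c z = T.dist z c := SimpleGraph.dist_comm
      omega
    have hzcore : IsCore T z := three_le_degree hT hnv hnc hnm hnvc hnvm hncm
    have hzB : z ∈ Branch T v x := mem_branch_of_geodesic_prefix hT hadj hmB e2 hzv
    by_cases hzreg : IsRegularCore T z
    · exact recstep z hzB hzreg hzv hzm e2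
    · exact (not_between hT (regular_free_small hzcore hzreg) hvcore hmcore e2
        hzv hzm).elim

/-- Claim H : every small core lies in a modified-leg-like branch of some regular core. -/
lemma claimH (hT : T.IsTree) {m : V} (hm : IsSmallCore T m)
    (hcore : ∃ r : V, IsRegularCore T r) :
    ∃ v x, IsRegularCore T v ∧ T.Adj v x ∧ m ∈ Branch T v x ∧
      ∀ c ∈ Branch T v x, IsCore T c → c = m := by
  obtain ⟨r, hr⟩ := hcore
  have hmr : r ≠ m := by
    rintro rfl
    exact hr.2 hm
  obtain ⟨x, hx, hdx⟩ := exists_toward hT hmr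
  exact claimH_aux hT hm _ r x hr hx hdx rfl

/-- separation : any vertex in one of the two opposite branches at the midpoint separates -/
lemma separates_aux (hT : T.IsTree) {m p q u w τ : V} (hp : T.Adj m p) (hq : T.Adj m q)
    (hpq : p ≠ q) (hu : u ∈ Branch T m p) (hw : w ∈ Branch T m q)
    (hk : T.dist m u = T.dist m w) (hτ : τ ∈ Branch T m p) : T.dist τ u ≠ T.dist τ w := by
  have h1 : T.dist τ w = T.dist τ m + T.dist m w := dist_add_of_branches_ne hT hp hq hpq hτ hw
  intro heq
  have h2 : T.dist τ u ≤ T.dist τ p + T.dist p u := dist_triangle hT _ _ _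
  have hb1 : T.dist m τ = T.dist p τ + 1 := hτ
  have hb2 : T.dist m u = T.dist p u + 1 := hu
  have c1 : T.dist τ p = T.dist p τ := SimpleGraph.dist_comm
  have c2 : T.dist τ m = T.dist m τ := SimpleGraph.dist_comm
  omega

lemma separates_of_mem (hT : T.IsTree) {m p q u w τ : V} (hp : T.Adj m p) (hq : T.Adj m q)
    (hpq : p ≠ q) (hu : u ∈ Branch T m p) (hw : w ∈ Branch T m q)
    (hk : T.dist m u = T.dist m w) (hτ : τ ∈ Branch T m p ∪ Branch T m q) :
    T.dist τ u ≠ T.dist τ w := by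
  rcases hτ with hτ | hτ
  · exact separates_aux hT hp hq hpq hu hw hk hτ
  · exact fun h => (separates_aux hT hq hp hpq.symm hw hu hk.symm hτ) h.symm

/-- a vertex at each position along a geodesic -/
lemma exists_on_geodesic (hT : T.IsTree) (u w : V) :
    ∀ j, j ≤ T.dist u w → ∃ m, T.dist u m = j ∧ T.dist u w = T.dist u m + T.dist m w := by
  intro j
  induction j with
  | zero =>
    intro _
    exact ⟨u, SimpleGraph.dist_self, by rw [SimpleGraph.dist_self]; omega⟩
  | succ j ihj =>
    intro hle
    obtain ⟨m, hm1, hm2⟩ := ihj (by omega)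
    have hmw : m ≠ w := by
      rintro rfl
      rw [SimpleGraph.dist_self] at hm2
      omega
    obtain ⟨nn, hnn, hdn⟩ := exists_toward hT hmw
    refine ⟨nn, ?_, ?_⟩
    · have h1 : T.dist u nn ≤ T.dist u m + 1 := by
        have := dist_triangle hT u m nn
        have := adj_dist hT hnn
        omega
      have h2 : T.dist u w ≤ T.dist u nn + T.dist nn w := dist_triangle hT _ _ _
      omega
    · have h1 : T.dist u nn ≤ T.dist u m + 1 := by
        have := dist_triangle hT u m nn
        have := adj_dist hT hnn
        omega
      have h2 : T.dist u w ≤ T.dist u nn + T.dist nn w := dist_triangle hT _ _ _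
      omega

/-- two distinct landmarks exist globally -/
lemma two_landmarks (hT : T.IsTree) {L : Set V}
    (hloc : ∀ v : V, IsRegularCore T v → IsLocalSet T v (L ∩ GLegVerts T v))
    (hcore : ∃ v : V, IsRegularCore T v) :
    ∃ τ₁ ∈ L, ∃ τ₂ ∈ L, τ₁ ≠ τ₂ := by
  classical
  obtain ⟨r, hr⟩ := hcore
  by_cases hreg : ∃ s, T.Adj r s ∧ ∃ y ∈ Branch T r s, IsRegularCore T y
  · obtain ⟨s, hs, hy⟩ := hreg
    obtain ⟨τ₁, hτ₁, τ₂, hτ₂, hne⟩ := claimE hT hloc hs hy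
    exact ⟨τ₁, hτ₁.1, τ₂, hτ₂.1, hne⟩
  push_neg at hreg
  have hgleg : ∀ s, T.Adj r s → IsGLeg T r s := by
    intro s hs
    exact divergence hT hr.1 hs (hreg s hs)
  obtain ⟨hsub, hpairS0, hstdsol, hmodsol, _, _, _⟩ := hloc r hr
  set S : Set V := L ∩ GLegVerts T r with hSdef
  have hleg_cases : ∀ s, T.Adj r s →
      (IsStandardLeg T r s ∧ SolS0 T r s S) ∨ (S ∩ Branch T r s).Nonempty := by
    intro s hs
    rcases hgleg s hs with hstd | hmod
    · rcases sol_std_cases (hstdsol s hstd) with h | h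
      · exact Or.inl ⟨hstd, h⟩
      · exact Or.inr h
    · exact Or.inr (sol_mod_nonempty (hmodsol s hmod))
  -- three distinct neighbours
  have hdeg : 3 ≤ (T.neighborFinset r).card := hr.1
  have hpos1 : 0 < (T.neighborFinset r).card := by omega
  obtain ⟨s₁, hs₁mem⟩ := Finset.card_pos.mp hpos1
  have hpos2 : 0 < ((T.neighborFinset r).erase s₁).card := by
    have := Finset.pred_card_le_card_erase (a := s₁) (s := T.neighborFinset r)
    omega
  obtain ⟨s₂, hs₂mem⟩ := Finset.card_pos.mp hpos2
  have hpos3 : 0 < (((T.neighborFinset r).erase s₁).erase s₂).card := by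
    have e1 := Finset.pred_card_le_card_erase (a := s₁) (s := T.neighborFinset r)
    have e2 := Finset.pred_card_le_card_erase (a := s₂) (s := (T.neighborFinset r).erase s₁)
    omega
  obtain ⟨s₃, hs₃mem⟩ := Finset.card_pos.mp hpos3
  have hs₁ : T.Adj r s₁ := by rwa [SimpleGraph.mem_neighborFinset] at hs₁mem
  have hs₂' := Finset.mem_of_mem_erase hs₂mem
  have hs₂ : T.Adj r s₂ := by rwa [SimpleGraph.mem_neighborFinset] at hs₂'
  have hs₃' := Finset.mem_of_mem_erase (Finset.mem_of_mem_erase hs₃mem)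
  have hs₃ : T.Adj r s₃ := by rwa [SimpleGraph.mem_neighborFinset] at hs₃'
  have h21 : s₂ ≠ s₁ := Finset.ne_of_mem_erase hs₂mem
  have h32 : s₃ ≠ s₂ := Finset.ne_of_mem_erase hs₃mem
  have h31 : s₃ ≠ s₁ := Finset.ne_of_mem_erase (Finset.mem_of_mem_erase hs₃mem)
  -- from two nonempty legs, conclude
  have fin2 : ∀ s t, T.Adj r s → T.Adj r t → s ≠ t →
      (S ∩ Branch T r s).Nonempty → (S ∩ Branch T r t).Nonempty →
      ∃ τ₁ ∈ L, ∃ τ₂ ∈ L, τ₁ ≠ τ₂ := by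
    rintro s t hs ht hst ⟨τ₁, hτ₁S, hτ₁B⟩ ⟨τ₂, hτ₂S, hτ₂B⟩
    refine ⟨τ₁, hτ₁S.1, τ₂, hτ₂S.1, ?_⟩
    rintro rfl
    exact hst (branch_disjoint hT hs ht hτ₁B hτ₂B)
  rcases hleg_cases s₁ hs₁ with ⟨hstd1, hS01⟩ | hne1
  · rcases hleg_cases s₂ hs₂ with ⟨hstd2, hS02⟩ | hne2
    · exact (hpairS0 s₁ s₂ hstd1 hstd2 h21.symm hS01 hS02).elim
    rcases hleg_cases s₃ hs₃ with ⟨hstd3, hS03⟩ | hne3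
    · exact (hpairS0 s₁ s₃ hstd1 hstd3 h31.symm hS01 hS03).elim
    · exact fin2 s₂ s₃ hs₂ hs₃ h32.symm hne2 hne3
  · rcases hleg_cases s₂ hs₂ with ⟨hstd2, hS02⟩ | hne2
    · rcases hleg_cases s₃ hs₃ with ⟨hstd3, hS03⟩ | hne3
      · exact (hpairS0 s₂ s₃ hstd2 hstd3 h32.symm hS02 hS03).elim
      · exact fin2 s₁ s₃ hs₁ hs₃ h31.symm hne1 hne3
    · exact fin2 s₁ s₂ hs₁ hs₂ h21.symm hne1 hne2

/-- nothing hangs off the path inside a branch whose only core is `m` -/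
lemma no_hang (hT : T.IsTree) {v x m : V} (hadj : T.Adj v x) (hmB : m ∈ Branch T v x)
    (hcores : ∀ c ∈ Branch T v x, IsCore T c → c = m)
    {sv : V} (hsv : T.Adj m sv) (hvsv : v ∈ Branch T m sv)
    {y : V} (hy : y ∈ Branch T v x) (hdepth : T.dist v m < T.dist v y) :
    ∃ s, T.Adj m s ∧ y ∈ Branch T m s ∧ s ≠ sv ∧ T.dist v y = T.dist v m + T.dist m y := by
  obtain ⟨z, e1, e2, e3⟩ := median hT v m y
  have hmv : m ≠ v := base_not_mem hT hmB
  by_cases hzv : z = v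
  · rw [hzv] at e1 e2 e3
    exfalso
    have hs : T.dist m y ≤ T.dist m x + T.dist x y := dist_triangle hT _ _ _
    have hb1 : T.dist v m = T.dist x m + 1 := hmB
    have hb2 : T.dist v y = T.dist x y + 1 := hy
    have c1 : T.dist m x = T.dist x m := SimpleGraph.dist_comm
    have c2 : T.dist m v = T.dist v m := SimpleGraph.dist_comm
    omega
  by_cases hzy : z = y
  · rw [hzy] at e1 e2 e3
    omega
  by_cases hzm : z = m
  · rw [hzm] at e1 e2 e3
    have hmy : m ≠ y := by rintro rfl; omega
    obtain ⟨s, hs, hds⟩ := exists_toward hT hmy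
    refine ⟨s, hs, hds, ?_, e2⟩
    rintro rfl
    -- y in the branch of m towards v : shortcut
    have hb1 : T.dist m v = T.dist s v + 1 := hvsv
    have hb2 : T.dist m y = T.dist s y + 1 := hds
    have htri : T.dist v y ≤ T.dist v s + T.dist s y := dist_triangle hT _ _ _
    have c1 : T.dist v s = T.dist s v := SimpleGraph.dist_comm
    have c2 : T.dist m v = T.dist v m := SimpleGraph.dist_comm
    omega
  · exfalso
    obtain ⟨nv, hnv, hdnv⟩ := exists_toward hT hzv
    obtain ⟨nm, hnm, hdnm⟩ := exists_toward hT hzm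
    obtain ⟨ny, hny, hdny⟩ := exists_toward hT hzy
    have hnvm : nv ≠ nm := by
      refine toward_ne hT hnv hnm hdnv hdnm ?_
      have c1 : T.dist v z = T.dist z v := SimpleGraph.dist_comm
      omega
    have hnvy : nv ≠ ny := by
      refine toward_ne hT hnv hny hdnv hdny ?_
      have c1 : T.dist v z = T.dist z v := SimpleGraph.dist_comm
      omega
    have hnmy : nm ≠ ny := by
      refine toward_ne hT hnm hny hdnm hdny ?_
      have c1 : T.dist m z = T.dist z m := SimpleGraph.dist_comm
      omega
    have hzcore : IsCore T z := three_le_degree hT hnv hnm hny hnvm hnvy hnmy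
    have hzB : z ∈ Branch T v x := mem_branch_of_geodesic_prefix hT hadj hmB e1 hzv
    exact hzm (hcores z hzB hzcore)

/-- even case, midpoint is a regular core -/
lemma even_regular (hT : T.IsTree) {L : Set V}
    (hloc : ∀ v : V, IsRegularCore T v → IsLocalSet T v (L ∩ GLegVerts T v))
    {m p q u w : V} (hm : IsRegularCore T m) (hp : T.Adj m p) (hq : T.Adj m q) (hpq : p ≠ q)
    (hu : u ∈ Branch T m p) (hw : w ∈ Branch T m q) (hk : T.dist m u = T.dist m w)
    (huL : u ∉ L) (hwL : w ∉ L)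
    (hpnr : ∀ y ∈ Branch T m p, ¬ IsRegularCore T y)
    (hqnr : ∀ y ∈ Branch T m q, ¬ IsRegularCore T y) :
    ∃ τ₁ ∈ L ∩ (Branch T m p ∪ Branch T m q), ∃ τ₂ ∈ L ∩ (Branch T m p ∪ Branch T m q),
      τ₁ ≠ τ₂ := by
  have hgp : IsGLeg T m p := divergence hT hm.1 hp hpnr
  have hgq : IsGLeg T m q := divergence hT hm.1 hq hqnr
  obtain ⟨hsub, hpairS0, hstdsol, hmodsol, hnoM1, hlongS0, hshortS0⟩ := hloc m hm
  set S : Set V := L ∩ GLegVerts T m with hSdef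
  have hleg_cases : ∀ s, T.Adj m s → IsGLeg T m s →
      (IsStandardLeg T m s ∧ SolS0 T m s S) ∨ (S ∩ Branch T m s).Nonempty := by
    intro s hs hg
    rcases hg with hstd | hmod
    · rcases sol_std_cases (hstdsol s hstd) with h | h
      · exact Or.inl ⟨hstd, h⟩
      · exact Or.inr h
    · exact Or.inr (sol_mod_nonempty (hmodsol s hmod))
  -- the asymmetric inner case
  have inner : ∀ sZ sE uZ wE, T.Adj m sZ → T.Adj m sE → sZ ≠ sE →
      IsStandardLeg T m sZ → SolS0 T m sZ S → IsGLeg T m sE →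
      uZ ∈ Branch T m sZ → wE ∈ Branch T m sE → T.dist m uZ = T.dist m wE →
      uZ ∉ L → wE ∉ L →
      ∃ τ₁ ∈ L ∩ (Branch T m sZ ∪ Branch T m sE),
        ∃ τ₂ ∈ L ∩ (Branch T m sZ ∪ Branch T m sE), τ₁ ≠ τ₂ := by
    intro sZ sE uZ wE hZ hE hZE hZstd hZS0 hEg huZ hwE hkk huZL hwEL
    have fin : (∃ τ₁ ∈ S ∩ Branch T m sE, ∃ τ₂ ∈ S ∩ Branch T m sE, τ₁ ≠ τ₂) →
        ∃ τ₁ ∈ L ∩ (Branch T m sZ ∪ Branch T m sE),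
          ∃ τ₂ ∈ L ∩ (Branch T m sZ ∪ Branch T m sE), τ₁ ≠ τ₂ := by
      rintro ⟨τ₁, ⟨hτ₁S, hτ₁B⟩, τ₂, ⟨hτ₂S, hτ₂B⟩, hne⟩
      exact ⟨τ₁, ⟨hτ₁S.1, Or.inr hτ₁B⟩, τ₂, ⟨hτ₂S.1, Or.inr hτ₂B⟩, hne⟩
    rcases hEg with hEstd | hEmod
    · rcases std_short_or_long hEstd with hEshort | hElong
      · -- sE short : wE = sE ∉ L, leg empty, contradiction with (1)
        exfalso
        have hwsE : wE = sE := by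
          have := hEshort.2 ▸ hwE
          simpa using this
        have hempty : S ∩ Branch T m sE = ∅ := by
          rw [S_inter_branch (Or.inl hEstd), hEshort.2]
          ext τ
          simp only [Set.mem_inter_iff, Set.mem_singleton_iff, Set.mem_empty_iff_false,
            iff_false, not_and]
          rintro hτL rfl
          exact (hwsE ▸ hwEL) hτL
        exact hpairS0 sZ sE hZstd hEstd hZE hZS0 hempty
      · rcases std_short_or_long hZstd with hZshort | hZlong
        · -- sZ short : uZ = sZ, positions equal 1, wE = sE
          have husZ : uZ = sZ := by
            have := hZshort.2 ▸ huZ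
            simpa using this
          have hk1 : T.dist m uZ = 1 := by rw [husZ]; exact adj_dist hT hZ
          have hwsE : wE = sE := by
            have hb : T.dist m wE = T.dist sE wE + 1 := hwE
            have : T.dist sE wE = 0 := by omega
            exact (dist_zero hT this).symm
          rcases hshortS0 ⟨sZ, hZshort, hZS0⟩ sE hElong with hS2 | hS3
          · exact fin (sol_two_of_std hS2)
          · exfalso
            have : sE ∈ S ∩ Branch T m sE := by rw [hS3]; rfl
            exact (hwsE ▸ hwEL) this.1.1
        · exact fin (sol_two_of_std (hlongS0 sZ hZlong hZS0 sE hElong hZE.symm))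
    · -- sE modified : M1 excluded by condition (3)
      have hnM1 := hnoM1 ⟨sZ, hZstd, hZS0⟩ sE hEmod
      rcases hmodsol sE hEmod with hM1 | hM
      · exact (hnM1 hM1).elim
      · exact fin (sol_two_of_mod hM)
  rcases hleg_cases p hp hgp with ⟨hstdp, hS0p⟩ | hnep
  · rcases hleg_cases q hq hgq with ⟨hstdq, hS0q⟩ | hneq
    · exact (hpairS0 p q hstdp hstdq hpq hS0p hS0q).elim
    · exact inner p q u w hp hq hpq hstdp hS0p hgq hu hw hk huL hwL
  · rcases hleg_cases q hq hgq with ⟨hstdq, hS0q⟩ | hneq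
    · have := inner q p w u hq hp hpq.symm hstdq hS0q hgp hw hu hk.symm hwL huL
      rw [Set.union_comm] at this
      exact this
    · obtain ⟨τ₁, hτ₁S, hτ₁B⟩ := hnep
      obtain ⟨τ₂, hτ₂S, hτ₂B⟩ := hneq
      refine ⟨τ₁, ⟨hτ₁S.1, Or.inl hτ₁B⟩, τ₂, ⟨hτ₂S.1, Or.inr hτ₂B⟩, ?_⟩
      rintro rfl
      exact hpq (branch_disjoint hT hp hq hτ₁B hτ₂B)

/-- even case, midpoint is a small core -/
lemma even_small (hT : T.IsTree) {L : Set V}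
    (hloc : ∀ v : V, IsRegularCore T v → IsLocalSet T v (L ∩ GLegVerts T v))
    (hcore : ∃ v : V, IsRegularCore T v)
    {m p q u w : V} (hm : IsSmallCore T m) (hp : T.Adj m p) (hq : T.Adj m q) (hpq : p ≠ q)
    (hu : u ∈ Branch T m p) (hw : w ∈ Branch T m q) (hk : T.dist m u = T.dist m w)
    (huL : u ∉ L) (hwL : w ∉ L)
    (hpnr : ∀ y ∈ Branch T m p, ¬ IsRegularCore T y)
    (hqnr : ∀ y ∈ Branch T m q, ¬ IsRegularCore T y) :
    ∃ τ₁ ∈ L ∩ (Branch T m p ∪ Branch T m q), ∃ τ₂ ∈ L ∩ (Branch T m p ∪ Branch T m q),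
      τ₁ ≠ τ₂ := by
  obtain ⟨hdeg, sx, sy, hsxy, hshort, hstd⟩ := hm
  have hm' : IsSmallCore T m := ⟨hdeg, sx, sy, hsxy, hshort, hstd⟩
  obtain ⟨r, hr⟩ := hcore
  have hrm : r ≠ m := by rintro rfl; exact hr.2 hm'
  obtain ⟨sr, hsradj, hrB⟩ := exists_branch hT hrm
  have hsrx : sr ≠ sx := by
    rintro rfl
    exact leg_coreless hshort.1 hrB hr.1
  have hsry : sr ≠ sy := by
    rintro rfl
    exact leg_coreless hstd hrB hr.1
  have hpmem : p = sx ∨ p = sy := by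
    rcases adj_mem_of_degree_three hdeg hshort.1.1 hstd.1 hsradj hsxy hsrx.symm hsry.symm hp
      with h | h | h
    · exact Or.inl h
    · exact Or.inr h
    · exact ((hpnr r (h ▸ hrB)) hr).elim
  have hqmem : q = sx ∨ q = sy := by
    rcases adj_mem_of_degree_three hdeg hshort.1.1 hstd.1 hsradj hsxy hsrx.symm hsry.symm hq
      with h | h | h
    · exact Or.inl h
    · exact Or.inr h
    · exact ((hqnr r (h ▸ hrB)) hr).elim
  -- u = p and w = q
  have hwq_of : w = q ∧ T.dist m w = 1 → w = q := fun h => h.1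
  have hupwq : u = p ∧ w = q := by
    have hshortBr : Branch T m sx = {sx} := hshort.2
    rcases hpmem with hpx | hpy
    · -- p = sx is short
      have hup : u = p := by
        have := (hpx ▸ hshortBr) ▸ hu
        simpa using this
      have hk1 : T.dist m u = 1 := by rw [hup, hpx]; exact adj_dist hT (hpx ▸ hp)
      have hwq : w = q := by
        have hb : T.dist m w = T.dist q w + 1 := hw
        have : T.dist q w = 0 := by omega
        exact (dist_zero hT this).symm
      exact ⟨hup, hwq⟩
    · -- p = sy, so q = sx
      have hqx : q = sx := by
        rcases hqmem with h | h
        · exact h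
        · exact (hpq (hpy.trans h.symm)).elim
      have hwq : w = q := by
        have := (hqx ▸ hshortBr) ▸ hw
        simpa using this
      have hk1 : T.dist m w = 1 := by rw [hwq, hqx]; exact adj_dist hT (hqx ▸ hq)
      have hup : u = p := by
        have hb : T.dist m u = T.dist p u + 1 := hu
        have : T.dist p u = 0 := by omega
        exact (dist_zero hT this).symm
      exact ⟨hup, hwq⟩
  obtain ⟨hup, hwq⟩ := hupwq
  -- claim H
  obtain ⟨v', x', hv'reg, hadj', hmℓ, hcores⟩ := claimH hT hm' ⟨r, hr⟩
  have hv'm : v' ≠ m := Ne.symm (base_not_mem hT hmℓ)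
  obtain ⟨sv, hsvadj, hv'B⟩ := exists_branch hT hv'm
  have hsvp : sv ≠ p := by
    rintro rfl
    exact hpnr v' hv'B hv'reg
  have hsvq : sv ≠ q := by
    rintro rfl
    exact hqnr v' hv'B hv'reg
  -- membership helper
  have hmem_pq : ∀ y ∈ Branch T v' x', T.dist v' m < T.dist v' y →
      (y ∈ Branch T m p ∪ Branch T m q) ∧ T.dist v' y = T.dist v' m + T.dist m y := by
    intro y hyℓ hdep
    obtain ⟨s, hsadj, hymem, hssv, hadd⟩ := no_hang hT hadj' hmℓ hcores hsvadj hv'B hyℓ hdep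
    rcases adj_mem_of_degree_three hdeg hp hq hsvadj hpq hsvp.symm hsvq.symm hsadj
      with h | h | h
    · exact ⟨Or.inl (h ▸ hymem), hadd⟩
    · exact ⟨Or.inr (h ▸ hymem), hadd⟩
    · exact ((hssv (h ▸ rfl)).elim)
  have hvert_pq : ∀ y ∈ Branch T v' x', T.dist v' y = T.dist v' m + 1 → y = p ∨ y = q := by
    intro y hyℓ hdep
    obtain ⟨hmem, hadd⟩ := hmem_pq y hyℓ (by omega)
    have hdy : T.dist m y = 1 := by omega
    rcases hmem with h | h
    · left
      have hb : T.dist m y = T.dist p y + 1 := h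
      have : T.dist p y = 0 := by omega
      exact (dist_zero hT this).symm
    · right
      have hb : T.dist m y = T.dist q y + 1 := h
      have : T.dist q y = 0 := by omega
      exact (dist_zero hT this).symm
  -- modified leg solutions at v'
  obtain ⟨_, _, _, hmodsol', _, _, _⟩ := hloc v' hv'reg
  have hmleg : IsModifiedLeg T v' x' := ⟨hadj', m, hmℓ, hm', hcores⟩
  have habL : ∀ c : V, c ∈ Branch T v' x' → T.dist v' c = T.dist v' m + 1 →
      c ∈ L → False := by
    intro c hcB hcd hcL
    rcases hvert_pq c hcB hcd with rfl | rfl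
    · exact huL (hup ▸ hcL)
    · exact hwL (hwq ▸ hcL)
  rcases hmodsol' x' hmleg with hM1 | hM2 | hM3
  · exfalso
    obtain ⟨u', a, b, ⟨hu'mem, hu'small, hab, haB, hbB, hda, hdb, hbshort⟩, hcase⟩ := hM1
    have hu'm : u' = m := hcores u' hu'mem (small_core_core hu'small)
    rcases hcase with hc | hc
    · have : a ∈ (L ∩ GLegVerts T v') ∩ Branch T v' x' := by rw [hc]; rfl
      exact habL a haB (hu'm ▸ hda) this.1.1
    · have : b ∈ (L ∩ GLegVerts T v') ∩ Branch T v' x' := by rw [hc]; rfl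
      exact habL b hbB (hu'm ▸ hdb) this.1.1
  · obtain ⟨u', a, b, ⟨hu'mem, hu'small, hab, haB, hbB, hda, hdb, hbshort⟩, haS, hbS,
      ⟨w1, hw1, w2, hw2, hne12, hd1, hd2⟩, hlast⟩ := hM2
    have hu'm : u' = m := hcores u' hu'mem (small_core_core hu'small)
    rw [hu'm] at hd1 hd2
    obtain ⟨hm1, _⟩ := hmem_pq w1 hw1.2 (by omega)
    obtain ⟨hm2, _⟩ := hmem_pq w2 hw2.2 (by omega)
    exact ⟨w1, ⟨hw1.1.1, hm1⟩, w2, ⟨hw2.1.1, hm2⟩, hne12⟩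
  · exfalso
    obtain ⟨u', a, b, ⟨hu'mem, hu'small, hab, haB, hbB, hda, hdb, hbshort⟩, htwo, hor⟩ := hM3
    have hu'm : u' = m := hcores u' hu'mem (small_core_core hu'small)
    rcases hor with h | h
    · exact habL a haB (hu'm ▸ hda) h.1
    · exact habL b hbB (hu'm ▸ hdb) h.1

end TreeAux

/-- in a tree with at least one regular core, if the restriction of `L`
to the g-legs of every regular core is a local set, then `L` is a landmark set. -/
theorem local_sets_give_landmark_set
    (T : SimpleGraph V) [DecidableRel T.Adj] (hT : T.IsTree)
    (hcore : ∃ v : V, IsRegularCore T v)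
    (L : Set V)
    (hloc : ∀ v : V, IsRegularCore T v → IsLocalSet T v (L ∩ GLegVerts T v)) :
    IsLandmarkSet T L := by
  classical
  intro u w hne huL hwL
  have hd1 : 1 ≤ T.dist u w := TreeAux.dist_pos hT hne
  rcases Nat.even_or_odd (T.dist u w) with ⟨k, hk⟩ | hodd
  · -- even distance : dist u w = k + k
    have hk1 : 1 ≤ k := by omega
    obtain ⟨m, hm1, hm2⟩ := TreeAux.exists_on_geodesic hT u w k (by omega)
    have hmu : T.dist m u = k := by
      have : T.dist m u = T.dist u m := SimpleGraph.dist_comm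
      omega
    have hmw : T.dist m w = k := by omega
    have hmune : m ≠ u := by
      rintro rfl
      rw [SimpleGraph.dist_self] at hmu
      omega
    have hmwne : m ≠ w := by
      rintro rfl
      rw [SimpleGraph.dist_self] at hmw
      omega
    obtain ⟨p, hpadj, hpd⟩ := TreeAux.exists_toward hT hmune
    obtain ⟨q, hqadj, hqd⟩ := TreeAux.exists_toward hT hmwne
    have hu : u ∈ Branch T m p := hpd
    have hw : w ∈ Branch T m q := hqd
    have hpq : p ≠ q := by
      refine TreeAux.toward_ne hT hpadj hqadj hpd hqd ?_
      exact hm2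
    have hk' : T.dist m u = T.dist m w := by omega
    -- produce two landmarks in the union of the two branches
    have main : ∃ τ₁ ∈ L ∩ (Branch T m p ∪ Branch T m q),
        ∃ τ₂ ∈ L ∩ (Branch T m p ∪ Branch T m q), τ₁ ≠ τ₂ := by
      by_cases hpreg : ∃ y ∈ Branch T m p, IsRegularCore T y
      · obtain ⟨τ₁, hτ₁, τ₂, hτ₂, hne'⟩ := TreeAux.claimE hT hloc hpadj hpreg
        exact ⟨τ₁, ⟨hτ₁.1, Or.inl hτ₁.2⟩, τ₂, ⟨hτ₂.1, Or.inl hτ₂.2⟩, hne'⟩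
      by_cases hqreg : ∃ y ∈ Branch T m q, IsRegularCore T y
      · obtain ⟨τ₁, hτ₁, τ₂, hτ₂, hne'⟩ := TreeAux.claimE hT hloc hqadj hqreg
        exact ⟨τ₁, ⟨hτ₁.1, Or.inr hτ₁.2⟩, τ₂, ⟨hτ₂.1, Or.inr hτ₂.2⟩, hne'⟩
      push_neg at hpreg hqreg
      by_cases hmr : IsRegularCore T m
      · exact TreeAux.even_regular hT hloc hmr hpadj hqadj hpq hu hw hk' huL hwL hpreg hqreg
      by_cases hmc : IsCore T m
      · exact TreeAux.even_small hT hloc hcore (TreeAux.regular_free_small hmc hmr)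
          hpadj hqadj hpq hu hw hk' huL hwL hpreg hqreg
      · exfalso
        obtain ⟨r, hr⟩ := hcore
        have hrm : r ≠ m := by
          rintro rfl
          exact hmc hr.1
        obtain ⟨sr, hsradj, hrB⟩ := TreeAux.exists_branch hT hrm
        by_cases hsp : sr = p
        · exact hpreg r (hsp ▸ hrB) hr
        by_cases hsq : sr = q
        · exact hqreg r (hsq ▸ hrB) hr
        · exact hmc (TreeAux.three_le_degree hT hpadj hqadj hsradj hpq
            (fun h => hsp h.symm) (fun h => hsq h.symm))
    obtain ⟨τ₁, ⟨hτ₁L, hτ₁B⟩, τ₂, ⟨hτ₂L, hτ₂B⟩, hne'⟩ := main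
    exact ⟨τ₁, hτ₁L, τ₂, hτ₂L, hne',
      TreeAux.separates_of_mem hT hpadj hqadj hpq hu hw hk' hτ₁B,
      TreeAux.separates_of_mem hT hpadj hqadj hpq hu hw hk' hτ₂B⟩
  · -- odd distance : every vertex separates
    have hsep : ∀ τ : V, Separates T τ u w := by
      intro τ heq
      obtain ⟨z, e1, e2, e3⟩ := TreeAux.median hT u w τ
      have c1 : T.dist τ u = T.dist u τ := SimpleGraph.dist_comm
      have c2 : T.dist τ w = T.dist w τ := SimpleGraph.dist_comm
      have c3 : T.dist z w = T.dist w z := SimpleGraph.dist_comm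
      obtain ⟨j, hj⟩ := hodd
      omega
    obtain ⟨τ₁, hτ₁, τ₂, hτ₂, hne'⟩ := TreeAux.two_landmarks hT hloc hcore
    exact ⟨τ₁, hτ₁, τ₂, hτ₂, hne', hsep τ₁, hsep τ₂⟩
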